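/- Let S = K[x_1,...,x_n] and let Γ be a set of multidegrees (monomials) closed under taking least common multiples. If M is a Zⁿ-graded S-module admitting a presentation whose generators and relations have multidegrees in Γ, then every free module in a minimal Zⁿ-graded free resolution of M has all its generators in multidegrees in Γ. In particular, if M has a squarefree presentation then all Betti numbers β_{i,a}(M) vanish unless a ∈ {0,1}ⁿ. -/

import Mathlib

open MvPolynomial in
private lemma X_dvd_of_support {K : Type*} [Field K] {n : ℕ} (j : Fin n)
    (p : MvPolynomial (Fin n) K) (h : ∀ m ∈ p.support, m j ≠ 0) :
    X j ∣ p := by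
  rw [p.as_sum]
  refine Finset.dvd_sum fun m hm => ?_
  rw [X_dvd_monomial]
  exact Or.inr (h m hm)

private lemma gamma_sup {n : ℕ} (Γ : Set (Fin n →₀ ℕ))
    (hΓ : ∀ u ∈ Γ, ∀ v ∈ Γ, ∃ w ∈ Γ, ∀ i, w i = max (u i) (v i))
    {α : Type*} {s : Finset α} (hs : s.Nonempty) (f : α → (Fin n →₀ ℕ))
    (hf : ∀ r ∈ s, f r ∈ Γ) :
    ∃ w ∈ Γ, ∀ j, w j = s.sup' hs (fun r => f r j) := by
  classical
  induction hs using Finset.Nonempty.cons_induction with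
  | singleton a => exact ⟨f a, hf a (by simp), fun j => by simp⟩
  | cons a s ha hs ih =>
      obtain ⟨w, hwΓ, hw⟩ := ih (fun r hr => hf r (Finset.mem_cons_of_mem hr))
      obtain ⟨w', hw'Γ, hw'⟩ := hΓ (f a) (hf a (Finset.mem_cons_self a s)) w hwΓ
      refine ⟨w', hw'Γ, fun j => ?_⟩
      rw [hw' j, hw j, Finset.sup'_cons]

open MvPolynomial in
/-- (Bruns–Herzog) Let `Γ` be a set of multidegrees of `S = K[x₁,…,xₙ]` closed under
least common multiples (componentwise max).  If a `ℤⁿ`-graded `S`-module `M` has a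
(minimal) presentation with generator and relation multidegrees in `Γ`, then every free
module in a minimal `ℤⁿ`-graded free resolution of `M` has all its generators in
multidegrees in `Γ`.  The resolution is encoded by matrices `A i` between free modules
with generator multidegrees `deg i`; `hhom` says the maps are multihomogeneous of
degree 0, `hmin` says the resolution is minimal (no unit entries), `hexact` is
exactness, so `M = coker (A 0)`; `hΓ0`/`hΓ1` say the presentation degrees lie in `Γ`. -/
theorem stmt12 (K : Type*) [Field K] (n : ℕ) (Γ : Set (Fin n →₀ ℕ))
    (hΓ : ∀ u ∈ Γ, ∀ v ∈ Γ, ∃ w ∈ Γ, ∀ i, w i = max (u i) (v i))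
    (b : ℕ → ℕ) (deg : (i : ℕ) → Fin (b i) → (Fin n →₀ ℕ))
    (A : (i : ℕ) → Matrix (Fin (b i)) (Fin (b (i + 1))) (MvPolynomial (Fin n) K))
    (hhom : ∀ (i : ℕ) (r : Fin (b i)) (c : Fin (b (i + 1))),
      ∀ m ∈ (A i r c).support, deg i r + m = deg (i + 1) c)
    (hmin : ∀ (i : ℕ) (r : Fin (b i)) (c : Fin (b (i + 1))),
      MvPolynomial.coeff 0 (A i r c) = 0)
    (hexact : ∀ i : ℕ,
      LinearMap.ker (Matrix.toLin' (A i)) = LinearMap.range (Matrix.toLin' (A (i + 1))))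
    (hΓ0 : ∀ r : Fin (b 0), deg 0 r ∈ Γ)
    (hΓ1 : ∀ c : Fin (b 1), deg 1 c ∈ Γ) :
    ∀ (i : ℕ) (r : Fin (b i)), deg i r ∈ Γ := by
  classical
  -- if a vector is in the kernel of `A i`, all its entries have zero constant coefficient
  have key : ∀ (i : ℕ) (z : Fin (b (i + 1)) → MvPolynomial (Fin n) K),
      (A i).mulVec z = 0 → ∀ c, constantCoeff (z c) = 0 := by
    intro i z hz c
    have hz' : z ∈ LinearMap.ker (Matrix.toLin' (A i)) := by
      rw [LinearMap.mem_ker, Matrix.toLin'_apply, hz]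
    rw [hexact i] at hz'
    obtain ⟨w, hw⟩ := hz'
    rw [Matrix.toLin'_apply] at hw
    have : z c = ∑ k, A (i + 1) c k * w k := by
      rw [← hw]; rfl
    rw [this, map_sum]
    refine Finset.sum_eq_zero fun k _ => ?_
    rw [map_mul]
    have : constantCoeff (A (i + 1) c k) = 0 := hmin (i + 1) c k
    rw [this, zero_mul]
  -- the main inductive step
  have main : ∀ i : ℕ, (∀ r : Fin (b (i + 1)), deg (i + 1) r ∈ Γ) →
      ∀ c : Fin (b (i + 2)), deg (i + 2) c ∈ Γ := by
    intro i H1 c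
    set v : Fin (b (i + 1)) → MvPolynomial (Fin n) K := fun r => A (i + 1) r c with hv
    have hvcol : (A (i + 1)).mulVec (Pi.single c 1) = v := by
      ext r; simp [hv]
    -- v is in the kernel of A i
    have hker : v ∈ LinearMap.ker (Matrix.toLin' (A i)) := by
      rw [hexact i]
      exact ⟨Pi.single c 1, by rw [Matrix.toLin'_apply, hvcol]⟩
    -- v ≠ 0
    have hvne : v ≠ 0 := by
      intro h0
      have := key (i + 1) (Pi.single c 1) (by rw [hvcol, h0]) c
      simp at this
    obtain ⟨r0, hr0⟩ : ∃ r, v r ≠ 0 := by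
      by_contra h
      push_neg at h
      exact hvne (funext h)
    set R : Finset (Fin (b (i + 1))) := Finset.univ.filter (fun r => v r ≠ 0) with hR
    have hRne : R.Nonempty := ⟨r0, by simp [hR, hr0]⟩
    have hmemR : ∀ r, r ∈ R ↔ v r ≠ 0 := fun r => by simp [hR]
    obtain ⟨w, hwΓ, hw⟩ := gamma_sup Γ hΓ hRne (fun r => deg (i + 1) r)
      (fun r _ => H1 r)
    -- each relevant degree is bounded by the target degree
    have hle : ∀ r, v r ≠ 0 → ∀ j, deg (i + 1) r j ≤ deg (i + 2) c j := by
      intro r hr j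
      obtain ⟨m, hm⟩ := Finset.nonempty_iff_ne_empty.mpr (mt MvPolynomial.support_eq_empty.mp hr)
      have := hhom (i + 1) r c m hm
      have : deg (i + 1) r j + m j = deg (i + 2) c j := by
        rw [← this]; rfl
      omega
    have hwle : ∀ j, w j ≤ deg (i + 2) c j := by
      intro j
      rw [hw]
      exact Finset.sup'_le _ _ fun r hr => hle r ((hmemR r).mp hr) j
    -- no coordinate of w can be strictly smaller
    have hweq : ∀ j, w j = deg (i + 2) c j := by
      intro j
      by_contra hne
      have hlt : w j < deg (i + 2) c j := lt_of_le_of_ne (hwle j) hne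
      -- every component of v is divisible by X j
      have hdvd : ∀ r, X j ∣ v r := by
        intro r
        by_cases hr : v r = 0
        · rw [hr]; exact dvd_zero _
        · refine X_dvd_of_support j _ fun m hm => ?_
          have h1 := hhom (i + 1) r c m hm
          have h2 : deg (i + 1) r j + m j = deg (i + 2) c j := by
            rw [← h1]; rfl
          have h3 : deg (i + 1) r j ≤ w j := by
            rw [hw]
            exact Finset.le_sup' (fun r => deg (i + 1) r j) ((hmemR r).mpr hr)
          omega
      choose u hu using hdvd
      have hvu : v = (X j : MvPolynomial (Fin n) K) • u := by
        funext r
        rw [Pi.smul_apply, smul_eq_mul, ← hu r]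
      -- u is also in the kernel of A i
      have hAu : Matrix.toLin' (A i) u = 0 := by
        have h0 : Matrix.toLin' (A i) v = 0 := hker
        rw [hvu, map_smul] at h0
        funext p
        have := congrFun h0 p
        rw [Pi.smul_apply, smul_eq_mul] at this
        have hX : (X j : MvPolynomial (Fin n) K) ≠ 0 := X_ne_zero j
        rcases mul_eq_zero.mp this with h | h
        · exact absurd h hX
        · exact h
      have humem : u ∈ LinearMap.ker (Matrix.toLin' (A i)) := hAu
      rw [hexact i] at humem
      obtain ⟨t, ht⟩ := humem
      rw [Matrix.toLin'_apply] at ht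
      -- Pi.single c 1 - X j • t is in the kernel of A (i+1)
      have hz : (A (i + 1)).mulVec (Pi.single c 1 - (X j : MvPolynomial (Fin n) K) • t) = 0 := by
        rw [Matrix.mulVec_sub, hvcol, Matrix.mulVec_smul, ht, ← hvu, sub_self]
      have := key (i + 1) _ hz c
      rw [Pi.sub_apply, Pi.smul_apply, Pi.single_eq_same, smul_eq_mul, map_sub,
        map_one, map_mul, constantCoeff_X, zero_mul, sub_zero] at this
      exact one_ne_zero this
    have : deg (i + 2) c = w := by
      ext j
      exact (hweq j).symm
    rw [this]
    exact hwΓ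
  -- bootstrap the two-step induction
  have all : ∀ i : ℕ, (∀ r : Fin (b i), deg i r ∈ Γ) ∧
      (∀ r : Fin (b (i + 1)), deg (i + 1) r ∈ Γ) := by
    intro i
    induction i with
    | zero => exact ⟨hΓ0, hΓ1⟩
    | succ k ih => exact ⟨ih.2, main k ih.2⟩
  exact fun i => (all i).1
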